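/- For complex numbers u and t with −1 < Re(t) < −1 − 2Re(u), one has ∫_0^∞ (1+x^2)^u x^t dx = (1/2) B( (t+1)/2 , (−2u−t−1)/2 ), where the powers are principal branches (with 1+x^2 > 0 and x > 0 real) and B(z,w) = Γ(z)Γ(w)/Γ(z+w). -/

import Mathlib

open MeasureTheory

/-- The complex beta function `B(z,w) = Γ(z)Γ(w)/Γ(z+w)`. -/
noncomputable def betaC (z w : ℂ) : ℂ := Complex.Gamma z * Complex.Gamma w / Complex.Gamma (z + w)

section Aux
open Set Real

noncomputable def gfun (s : ℝ) : ℝ := Real.sqrt (s / (1 - s))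
noncomputable def gder (s : ℝ) : ℝ := 1 / (2 * Real.sqrt (s / (1 - s))) * (1 / (1 - s) ^ 2)

lemma gfun_hasDeriv {s : ℝ} (hs : s ∈ Ioo (0:ℝ) 1) : HasDerivAt gfun (gder s) s := by
  obtain ⟨h0, h1⟩ := hs
  have h1s : (0:ℝ) < 1 - s := by linarith
  have hd : HasDerivAt (fun s : ℝ => s / (1 - s)) (1 / (1 - s) ^ 2) s := by
    have := (hasDerivAt_id s).div ((hasDerivAt_id s).const_sub 1) (ne_of_gt h1s)
    convert this using 1
    · rfl
    · rfl
    · rfl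
    · simp only [id]; ring
  have hpos : 0 < s / (1 - s) := div_pos h0 h1s
  exact (Real.hasDerivAt_sqrt (ne_of_gt hpos)).comp s hd

lemma gfun_inj : InjOn gfun (Ioo (0:ℝ) 1) := by
  intro a ha b hb hab
  obtain ⟨ha0, ha1⟩ := ha; obtain ⟨hb0, hb1⟩ := hb
  have h1a : (0:ℝ) < 1 - a := by linarith
  have h1b : (0:ℝ) < 1 - b := by linarith
  have h : a / (1 - a) = b / (1 - b) := by
    have := congrArg (fun x => x ^ 2) hab
    simpa [gfun, Real.sq_sqrt (le_of_lt (div_pos ha0 h1a)),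
      Real.sq_sqrt (le_of_lt (div_pos hb0 h1b))] using this
  field_simp at h
  linarith
  
lemma gfun_image : gfun '' (Ioo (0:ℝ) 1) = Ioi (0:ℝ) := by
  ext x
  constructor
  · rintro ⟨s, ⟨hs0, hs1⟩, rfl⟩
    exact Real.sqrt_pos.mpr (div_pos hs0 (by linarith))
  · intro hx
    refine ⟨x ^ 2 / (1 + x ^ 2), ⟨?_, ?_⟩, ?_⟩
    · have := mem_Ioi.mp hx; positivity
    · rw [div_lt_one (by positivity)]; nlinarith [mem_Ioi.mp hx]
    · have hx0 := mem_Ioi.mp hx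
      have : x ^ 2 / (1 + x ^ 2) / (1 - x ^ 2 / (1 + x ^ 2)) = x ^ 2 := by
        field_simp
        ring
      rw [gfun, this, Real.sqrt_sq hx0.le]

lemma re_div_two (z : ℂ) : (z / 2).re = z.re / 2 := by
  have := Complex.div_ofReal_re z 2
  push_cast at this
  exact this

lemma sqrt_cpow {x : ℝ} (hx : 0 < x) (c : ℂ) :
    ((Real.sqrt x : ℝ) : ℂ) ^ c = (x : ℂ) ^ (c / 2) := by
  rw [Real.sqrt_eq_rpow, Complex.ofReal_cpow hx.le, ← Complex.cpow_mul]
  · norm_num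
    ring_nf
  · rw [← Complex.ofReal_log hx.le]
    simp [Real.pi_pos]
  · rw [← Complex.ofReal_log hx.le]
    simp [Real.pi_pos.le]

lemma inv_cpow' {x : ℝ} (hx : 0 < x) (c : ℂ) :
    (((x⁻¹ : ℝ)) : ℂ) ^ c = (x : ℂ) ^ (-c) := by
  rw [Complex.ofReal_inv, Complex.inv_cpow, ← Complex.cpow_neg]
  rw [Complex.arg_ofReal_of_nonneg hx.le]
  exact Real.pi_ne_zero.symm

lemma div_cpow' {a b : ℝ} (ha : 0 ≤ a) (hb : 0 < b) (c : ℂ) :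
    (((a / b : ℝ)) : ℂ) ^ c = (a : ℂ) ^ c * (b : ℂ) ^ (-c) := by
  rw [div_eq_mul_inv, Complex.ofReal_mul, Complex.mul_cpow_ofReal_nonneg ha (by positivity), inv_cpow' hb]

lemma key (u t : ℂ) {s : ℝ} (hs : s ∈ Ioo (0:ℝ) 1) :
    ((gder s : ℝ) : ℂ) * (((1 + (gfun s) ^ 2 : ℝ) : ℂ) ^ u * ((gfun s : ℝ) : ℂ) ^ t) =
      (1 / 2) * ((s : ℝ) : ℂ) ^ ((t + 1) / 2 - 1) *
        ((1 - s : ℝ) : ℂ) ^ ((-2 * u - t - 1) / 2 - 1) := by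
  obtain ⟨hs0, hs1⟩ := hs
  have hq : (0:ℝ) < 1 - s := by linarith
  have hsq : (0:ℝ) < s / (1 - s) := div_pos hs0 hq
  have h1 : (1 : ℝ) + (gfun s) ^ 2 = (1 - s)⁻¹ := by
    rw [gfun, Real.sq_sqrt hsq.le]
    field_simp
    ring
  have h2 : gder s = 1 / 2 * (Real.sqrt (s / (1 - s)))⁻¹ * ((1 - s) ^ 2)⁻¹ := by
    rw [gder]; ring
  have hsqrtpos : 0 < Real.sqrt (s / (1 - s)) := Real.sqrt_pos.mpr hsq
  have hsC : (s : ℂ) ≠ 0 := by exact_mod_cast hs0.ne'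
  have hqC : ((1 - s : ℝ) : ℂ) ≠ 0 := by exact_mod_cast hq.ne'
  have e1 : ((gfun s : ℝ) : ℂ) ^ t = (s:ℂ) ^ (t/2) * ((1-s:ℝ):ℂ) ^ (-(t/2)) := by
    rw [gfun, sqrt_cpow hsq, div_cpow' hs0.le hq]
  have e2 : (((1 + (gfun s) ^ 2 : ℝ)) : ℂ) ^ u = ((1-s:ℝ):ℂ) ^ (-u) := by
    rw [h1, inv_cpow' hq]
  have hsqinv : (((Real.sqrt (s/(1-s)))⁻¹ : ℝ) : ℂ) =
      (s:ℂ) ^ (-(1/2) : ℂ) * ((1-s:ℝ):ℂ) ^ ((1/2) : ℂ) := by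
    rw [Complex.ofReal_inv, ← Complex.cpow_neg_one, sqrt_cpow hsq, div_cpow' hs0.le hq]
    norm_num
  have hpow2 : ((((1 - s) ^ 2)⁻¹ : ℝ) : ℂ) = ((1-s:ℝ):ℂ) ^ (-2 : ℂ) := by
    rw [show (-2 : ℂ) = -(2:ℕ) by norm_num, Complex.cpow_neg, Complex.cpow_natCast]
    push_cast
    ring_nf
  have e3 : ((gder s : ℝ) : ℂ) =
      (1/2) * ((s:ℂ) ^ (-(1/2) : ℂ) * ((1-s:ℝ):ℂ) ^ ((1/2) : ℂ)) * ((1-s:ℝ):ℂ) ^ (-2 : ℂ) := by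
    rw [h2, Complex.ofReal_mul, Complex.ofReal_mul, hsqinv, hpow2]
    norm_num
  rw [e1, e2, e3,
    show (t+1)/2 - 1 = -(1/2) + t/2 by ring, Complex.cpow_add _ _ hsC,
    show (-2*u-t-1)/2 - 1 = (1/2) + (-2 + (-u + -(t/2))) by ring,
    Complex.cpow_add _ _ hqC, Complex.cpow_add _ _ hqC, Complex.cpow_add _ _ hqC]
  ring

end Aux

open Set Real in
/-- `∫₀^∞ (1+x²)^u x^t dx = ½ B((t+1)/2, (−2u−t−1)/2)` for `−1 < Re t < −1 − 2 Re u`. -/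
theorem statement10 (u t : ℂ) (h1 : -1 < t.re) (h2 : t.re < -1 - 2 * u.re) :
    (∫ x in Set.Ioi (0 : ℝ), ((1 + x ^ 2 : ℝ) : ℂ) ^ u * ((x : ℝ) : ℂ) ^ t) =
      (1 / 2) * betaC ((t + 1) / 2) ((-2 * u - t - 1) / 2) := by
  set a := (t + 1) / 2 with ha_def
  set b := (-2 * u - t - 1) / 2 with hb_def
  have hare : 0 < a.re := by
    rw [ha_def, re_div_two]
    simp only [Complex.add_re, Complex.one_re]
    linarith
  have hbre : 0 < b.re := by
    rw [hb_def, re_div_two]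
    simp only [Complex.sub_re, Complex.mul_re, Complex.neg_re, Complex.one_re]
    simp
    linarith
  have hab : a + b = -u := by rw [ha_def, hb_def]; ring
  have hGne : Complex.Gamma (a + b) ≠ 0 := by
    apply Complex.Gamma_ne_zero_of_re_pos
    rw [hab, Complex.neg_re]
    linarith
  have hbeta : betaC a b = Complex.betaIntegral a b := by
    rw [betaC, div_eq_iff hGne, Complex.Gamma_mul_Gamma_eq_betaIntegral hare hbre, mul_comm]
  -- change of variables
  have step1 : (∫ x in Set.Ioi (0 : ℝ), ((1 + x ^ 2 : ℝ) : ℂ) ^ u * ((x : ℝ) : ℂ) ^ t)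
      = ∫ s in Set.Ioo (0:ℝ) 1, |gder s| •
          (((1 + (gfun s) ^ 2 : ℝ) : ℂ) ^ u * ((gfun s : ℝ) : ℂ) ^ t) := by
    rw [← gfun_image]
    exact integral_image_eq_integral_abs_deriv_smul measurableSet_Ioo
      (fun x hx => (gfun_hasDeriv hx).hasDerivWithinAt) gfun_inj _
  rw [step1]
  have step2 : (∫ s in Set.Ioo (0:ℝ) 1, |gder s| •
          (((1 + (gfun s) ^ 2 : ℝ) : ℂ) ^ u * ((gfun s : ℝ) : ℂ) ^ t))
      = ∫ s in Set.Ioo (0:ℝ) 1,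
          (1 / 2 : ℂ) * ((s : ℝ) : ℂ) ^ (a - 1) * ((1 - s : ℝ) : ℂ) ^ (b - 1) := by
    refine setIntegral_congr_fun measurableSet_Ioo fun s hs => ?_
    have hgpos : 0 < gder s := by
      obtain ⟨hs0, hs1⟩ := hs
      have hq : (0:ℝ) < 1 - s := by linarith
      have hsq : (0:ℝ) < s / (1 - s) := div_pos hs0 hq
      rw [gder]
      positivity
    rw [abs_of_pos hgpos, Complex.real_smul, key u t hs]
  rw [step2, hbeta, Complex.betaIntegral]
  rw [intervalIntegral.integral_of_le (by norm_num : (0:ℝ) ≤ 1),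
    ← integral_Ioc_eq_integral_Ioo]
  rw [← integral_const_mul]
  congr 1
  ext s
  push_cast
  ring
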